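/- Let h : ℤ × ℤ → ℤ be a pseudo-height function (|h changes by exactly 1 between lattice-adjacent points) and fix (n₀, i₀, j₀) with n₀ ≡ i₀ + j₀ (mod 2). Define p(i,j) = n₀ - |i-i₀| - |j-j₀|. If h(i,j) < p(i,j), and (i',j') satisfies i' between i₀ and i (inclusive) and j' between j₀ and j (inclusive), then h(i',j') < p(i',j'). -/

import Mathlib

theorem closed_faces_staircase_convex (h : ℤ → ℤ → ℤ)
    (hadj : ∀ i₁ j₁ i₂ j₂ : ℤ, |i₁ - i₂| + |j₁ - j₂| = 1 → |h i₁ j₁ - h i₂ j₂| = 1)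
    (hpar : ∀ i j : ℤ, h i j % 2 = (i + j) % 2)
    (n₀ i₀ j₀ : ℤ) (hpar0 : (n₀ + i₀ + j₀) % 2 = 0)
    (i j i' j' : ℤ)
    (hclosed : h i j < n₀ - |i - i₀| - |j - j₀|)
    (hi'1 : min i₀ i ≤ i') (hi'2 : i' ≤ max i₀ i)
    (hj'1 : min j₀ j ≤ j') (hj'2 : j' ≤ max j₀ j) :
    h i' j' < n₀ - |i' - i₀| - |j' - j₀| := by
  -- 1-Lipschitz in the first coordinate, for nonnegative steps
  have lip1 : ∀ (n : ℕ) (a b : ℤ), |h (a + n) b - h a b| ≤ (n : ℤ) := by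
    intro n
    induction n with
    | zero => intro a b; simp
    | succ m ih =>
      intro a b
      have hstep : |h (a + (m + 1 : ℕ)) b - h (a + m) b| = 1 := by
        apply hadj
        have : ((a + (m + 1 : ℕ)) - (a + (m : ℕ))) = 1 := by push_cast; ring
        rw [this]; simp
      calc |h (a + (m + 1 : ℕ)) b - h a b|
          ≤ |h (a + (m + 1 : ℕ)) b - h (a + m) b| + |h (a + m) b - h a b| := by
            apply abs_sub_le
        _ ≤ 1 + m := by rw [hstep]; exact add_le_add_right (ih a b) 1
        _ = ((m + 1 : ℕ) : ℤ) := by push_cast; ring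
  have lipi : ∀ (a a' b : ℤ), |h a b - h a' b| ≤ |a - a'| := by
    intro a a' b
    rcases le_total a' a with hle | hle
    · have : a = a' + (a - a').toNat := by omega
      rw [this]
      have := lip1 (a - a').toNat a' b
      calc |h (a' + (a - a').toNat) b - h a' b| ≤ ((a - a').toNat : ℤ) := this
        _ ≤ |a' + (a - a').toNat - a'| := by
            rw [Int.abs_eq_natAbs]; omega
    · have : a' = a + (a' - a).toNat := by omega
      rw [abs_sub_comm, this]
      have := lip1 (a' - a).toNat a b
      calc |h (a + (a' - a).toNat) b - h a b| ≤ ((a' - a).toNat : ℤ) := this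
        _ ≤ |a - (a + (a' - a).toNat)| := by
            rw [Int.abs_eq_natAbs]; omega
  have lip1j : ∀ (n : ℕ) (a b : ℤ), |h a (b + n) - h a b| ≤ (n : ℤ) := by
    intro n
    induction n with
    | zero => intro a b; simp
    | succ m ih =>
      intro a b
      have hstep : |h a (b + (m + 1 : ℕ)) - h a (b + m)| = 1 := by
        apply hadj
        have : ((b + (m + 1 : ℕ)) - (b + (m : ℕ))) = 1 := by push_cast; ring
        rw [this]; simp
      calc |h a (b + (m + 1 : ℕ)) - h a b|
          ≤ |h a (b + (m + 1 : ℕ)) - h a (b + m)| + |h a (b + m) - h a b| := by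
            apply abs_sub_le
        _ ≤ 1 + m := by rw [hstep]; exact add_le_add_right (ih a b) 1
        _ = ((m + 1 : ℕ) : ℤ) := by push_cast; ring
  have lipj : ∀ (a b b' : ℤ), |h a b - h a b'| ≤ |b - b'| := by
    intro a b b'
    rcases le_total b' b with hle | hle
    · have : b = b' + (b - b').toNat := by omega
      rw [this]
      have := lip1j (b - b').toNat a b'
      calc |h a (b' + (b - b').toNat) - h a b'| ≤ ((b - b').toNat : ℤ) := this
        _ ≤ |b' + (b - b').toNat - b'| := by
            rw [Int.abs_eq_natAbs]; omega
    · have : b' = b + (b' - b).toNat := by omega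
      rw [abs_sub_comm, this]
      have := lip1j (b' - b).toNat a b
      calc |h a (b + (b' - b).toNat) - h a b| ≤ ((b' - b).toNat : ℤ) := this
        _ ≤ |b - (b + (b' - b).toNat)| := by
            rw [Int.abs_eq_natAbs]; omega
  have key : |h i j - h i' j'| ≤ |i - i'| + |j - j'| := by
    calc |h i j - h i' j'| ≤ |h i j - h i' j| + |h i' j - h i' j'| := abs_sub_le _ _ _
      _ ≤ |i - i'| + |j - j'| := add_le_add (lipi i i' j) (lipj i' j j')
  simp only [Int.abs_eq_natAbs] at key hclosed ⊢
  omega
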